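/- arXiv:1808.05010 — 2 statements merged into one kernel-verified Lean document; each statement's English description precedes it below -/
import Mathlib

section
/- Let Y be a topologically irreducible weak Feller Markov chain on a metric space X. Then any invariant Borel measure μ of Y that is finite on some non-empty open set is locally finite. -/
open MeasureTheory Set
open scoped ENNReal BoundedContinuousFunction

namespace Stmt13Aux

variable {α β γ : Type*} [MeasurableSpace α] [MeasurableSpace β] [MeasurableSpace γ]

lemma map_bind (μ : Measure α) {κ : α → Measure β} (hκ : Measurable κ)
    {f : β → γ} (hf : Measurable f) :
    (μ.bind κ).map f = μ.bind (fun a => (κ a).map f) := by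
  have hm : Measurable (fun a => (κ a).map f) := (Measure.measurable_map f hf).comp hκ
  ext s hs
  rw [Measure.map_apply hf hs, Measure.bind_apply (hf hs) hκ.aemeasurable, Measure.bind_apply hs hm.aemeasurable]
  exact lintegral_congr fun a => (Measure.map_apply hf hs).symm

variable {X : Type*} [MetricSpace X] [MeasurableSpace X] [BorelSpace X]

/-- Iterated invariance. -/
lemma bind_eval_eq (P : X → Measure (ℕ → X)) (hPmeas : Measurable P)
    (hP0 : ∀ x, (P x).map (fun ω => ω 0) = Measure.dirac x)
    (hPstep : ∀ x, (P x).map (fun ω n => ω (n + 1)) = ((P x).map (fun ω => ω 1)).bind P)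
    (μ : Measure X)
    (hinv : Measure.map (fun ω => ω 1) (μ.bind P) = μ) (n : ℕ) :
    μ.bind (fun x => (P x).map (fun ω => ω n)) = μ := by
  have hshift : Measurable (fun (ω : ℕ → X) n => ω (n + 1)) :=
    measurable_pi_lambda _ fun i => measurable_pi_apply (i + 1)
  have hRmeas : ∀ m : ℕ, Measurable (fun x => (P x).map (fun ω => ω m)) := fun m =>
    (Measure.measurable_map _ (measurable_pi_apply m)).comp hPmeas
  have hQmeas : Measurable (fun x => (P x).map (fun ω => ω 1)) := hRmeas 1
  induction n with
  | zero =>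
    simp only [hP0]
    exact Measure.bind_dirac
  | succ n ih =>
    have key : ∀ x, (P x).map (fun ω => ω (n + 1)) =
        ((P x).map (fun ω => ω 1)).bind (fun y => (P y).map (fun ω => ω n)) := by
      intro x
      have h1 : (fun ω : ℕ → X => ω (n + 1)) =
          (fun ω : ℕ → X => ω n) ∘ (fun ω i => ω (i + 1)) := rfl
      rw [h1, ← Measure.map_map (measurable_pi_apply n) hshift, hPstep x,
        map_bind _ hPmeas (measurable_pi_apply n)]
    have hQinv : μ.bind (fun x => (P x).map (fun ω => ω 1)) = μ := by
      rw [← map_bind μ hPmeas (measurable_pi_apply 1)] at *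
      exact hinv
    calc μ.bind (fun x => (P x).map (fun ω => ω (n + 1)))
        = μ.bind (fun x => ((P x).map (fun ω => ω 1)).bind
            (fun y => (P y).map (fun ω => ω n))) := by
          congr 1; funext x; exact key x
      _ = (μ.bind (fun x => (P x).map (fun ω => ω 1))).bind
            (fun y => (P y).map (fun ω => ω n)) := (Measure.bind_bind hQmeas.aemeasurable (hRmeas n).aemeasurable).symm
      _ = μ.bind (fun y => (P y).map (fun ω => ω n)) := by rw [hQinv]
      _ = μ := ih

/-- One-step Feller in ℝ≥0∞ form. -/
lemma one_step (P : X → Measure (ℕ → X))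
    (hPprob : ∀ x, IsProbabilityMeasure (P x))
    (hfeller : ∀ f : X →ᵇ ℝ, Continuous fun x => ∫ ω, f (ω 1) ∂(P x))
    (h : X →ᵇ ℝ) (h0 : 0 ≤ (h : X → ℝ)) :
    ∃ g : X →ᵇ ℝ, 0 ≤ (g : X → ℝ) ∧
      ∀ x, ∫⁻ ω, ENNReal.ofReal (h (ω 1)) ∂(P x) = ENNReal.ofReal (g x) := by
  have hint : ∀ x, Integrable (fun ω : ℕ → X => h (ω 1)) (P x) := by
    intro x
    haveI := hPprob x
    have hmeas : Measurable (fun ω : ℕ → X => h (ω 1)) :=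
      h.continuous.measurable.comp (measurable_pi_apply 1)
    exact ⟨hmeas.aestronglyMeasurable,
      HasFiniteIntegral.of_bounded (C := ‖h‖) (ae_of_all _ fun ω => h.norm_coe_le_norm (ω 1))⟩
  have hbd : ∀ x, ‖∫ ω, h (ω 1) ∂(P x)‖ ≤ ‖h‖ := by
    intro x
    haveI := hPprob x
    calc ‖∫ ω, h (ω 1) ∂(P x)‖ ≤ ‖h‖ * ((P x) univ).toReal :=
          norm_integral_le_of_norm_le_const (ae_of_all _ fun ω => h.norm_coe_le_norm _)
      _ = ‖h‖ := by simp
  refine ⟨BoundedContinuousFunction.ofNormedAddCommGroup _ (hfeller h) ‖h‖ hbd, ?_, ?_⟩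
  · intro x
    exact integral_nonneg fun ω => h0 (ω 1)
  · intro x
    exact (ofReal_integral_eq_lintegral_ofReal (hint x)
      (ae_of_all _ fun ω => h0 (ω 1))).symm

/-- n-step Feller in ℝ≥0∞ form. -/
lemma n_step (P : X → Measure (ℕ → X)) (hPmeas : Measurable P)
    (hPprob : ∀ x, IsProbabilityMeasure (P x))
    (hP0 : ∀ x, (P x).map (fun ω => ω 0) = Measure.dirac x)
    (hPstep : ∀ x, (P x).map (fun ω n => ω (n + 1)) = ((P x).map (fun ω => ω 1)).bind P)
    (hfeller : ∀ f : X →ᵇ ℝ, Continuous fun x => ∫ ω, f (ω 1) ∂(P x))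
    (n : ℕ) (f : X →ᵇ ℝ) (f0 : 0 ≤ (f : X → ℝ)) :
    ∃ g : X →ᵇ ℝ, 0 ≤ (g : X → ℝ) ∧
      ∀ x, ∫⁻ ω, ENNReal.ofReal (f (ω n)) ∂(P x) = ENNReal.ofReal (g x) := by
  have hshift : Measurable (fun (ω : ℕ → X) n => ω (n + 1)) :=
    measurable_pi_lambda _ fun i => measurable_pi_apply (i + 1)
  induction n generalizing f with
  | zero =>
    refine ⟨f, f0, fun x => ?_⟩
    have hm : Measurable (fun y => ENNReal.ofReal (f y)) :=
      ENNReal.measurable_ofReal.comp f.continuous.measurable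
    calc ∫⁻ ω, ENNReal.ofReal (f (ω 0)) ∂(P x)
        = ∫⁻ y, ENNReal.ofReal (f y) ∂((P x).map (fun ω => ω 0)) :=
          (lintegral_map hm (measurable_pi_apply 0)).symm
      _ = ∫⁻ y, ENNReal.ofReal (f y) ∂(Measure.dirac x) := by rw [hP0 x]
      _ = ENNReal.ofReal (f x) := lintegral_dirac' x hm
  | succ n ih =>
    obtain ⟨g, g0, hg⟩ := ih f f0
    obtain ⟨g', g'0, hg'⟩ := one_step P hPprob hfeller g g0
    refine ⟨g', g'0, fun x => ?_⟩
    have hmf : Measurable (fun ω : ℕ → X => ENNReal.ofReal (f (ω n))) :=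
      (ENNReal.measurable_ofReal.comp f.continuous.measurable).comp (measurable_pi_apply n)
    have hmg : Measurable (fun y => ENNReal.ofReal (g y)) :=
      ENNReal.measurable_ofReal.comp g.continuous.measurable
    calc ∫⁻ ω, ENNReal.ofReal (f (ω (n + 1))) ∂(P x)
        = ∫⁻ ω', ENNReal.ofReal (f (ω' n)) ∂((P x).map (fun ω i => ω (i + 1))) :=
          (lintegral_map hmf hshift).symm
      _ = ∫⁻ ω', ENNReal.ofReal (f (ω' n)) ∂(((P x).map (fun ω => ω 1)).bind P) := by
          rw [hPstep x]
      _ = ∫⁻ y, (∫⁻ ω, ENNReal.ofReal (f (ω n)) ∂(P y)) ∂((P x).map (fun ω => ω 1)) :=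
          Measure.lintegral_bind hPmeas.aemeasurable hmf.aemeasurable
      _ = ∫⁻ y, ENNReal.ofReal (g y) ∂((P x).map (fun ω => ω 1)) := by
          exact lintegral_congr fun y => hg y
      _ = ∫⁻ ω, ENNReal.ofReal (g (ω 1)) ∂(P x) := lintegral_map hmg (measurable_pi_apply 1)
      _ = ENNReal.ofReal (g' x) := hg' x

end Stmt13Aux

/-- Let `Y` be a Markov chain on a metric space `X`, given by its family `P` of path-space
laws, which is topologically irreducible and weak Feller. Then any invariant Borel measure
`μ` of `Y` that is finite on some non-empty open set is locally finite. -/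
theorem stmt13 {X : Type*} [MetricSpace X] [MeasurableSpace X] [BorelSpace X]
    (P : X → Measure (ℕ → X)) (hPmeas : Measurable P)
    (hPprob : ∀ x, IsProbabilityMeasure (P x))
    (hP0 : ∀ x, (P x).map (fun ω => ω 0) = Measure.dirac x)
    (hPstep : ∀ x, (P x).map (fun ω n => ω (n + 1)) = ((P x).map (fun ω => ω 1)).bind P)
    (hirr : ∀ x : X, ∀ G : Set X, IsOpen G → G.Nonempty →
      0 < (P x) {ω | ∃ n, 1 ≤ n ∧ ω n ∈ G})
    (hfeller : ∀ f : X →ᵇ ℝ, Continuous fun x => ∫ ω, f (ω 1) ∂(P x))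
    (μ : Measure X)
    (hinv : Measure.map (fun ω => ω 1) (μ.bind P) = μ)
    (hfin : ∃ G : Set X, IsOpen G ∧ G.Nonempty ∧ μ G < ⊤) :
    IsLocallyFiniteMeasure μ := by
  obtain ⟨G, hGo, hGne, hGfin⟩ := hfin
  constructor
  intro x₀
  by_cases hGu : G = univ
  · exact ⟨univ, Filter.univ_mem, hGu ▸ hGfin⟩
  have hGc : Gᶜ.Nonempty := by
    rw [nonempty_compl]; exact hGu
  -- find m ≥ 1 with positive probability of hitting G at time m
  have hpos := hirr x₀ G hGo hGne
  have hsub : {ω : ℕ → X | ∃ n, 1 ≤ n ∧ ω n ∈ G} ⊆ ⋃ n : ℕ, (fun ω : ℕ → X => ω (n + 1)) ⁻¹' G := by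
    rintro ω ⟨n, hn1, hnG⟩
    exact mem_iUnion.mpr ⟨n - 1, by simpa [Nat.sub_add_cancel hn1] using hnG⟩
  have hex : ∃ n : ℕ, 0 < (P x₀) ((fun ω : ℕ → X => ω (n + 1)) ⁻¹' G) := by
    by_contra hcon
    push_neg at hcon
    have h0 : (P x₀) (⋃ n : ℕ, (fun ω : ℕ → X => ω (n + 1)) ⁻¹' G) = 0 :=
      measure_iUnion_null fun n => le_antisymm (hcon n) (by simp)
    exact absurd (measure_mono_null hsub h0) (ne_of_gt hpos)
  obtain ⟨n₀, hn₀⟩ := hex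
  set m := n₀ + 1 with hm
  set c : ℝ≥0∞ := (P x₀) ((fun ω : ℕ → X => ω m) ⁻¹' G) with hc
  have hc0 : 0 < c := hn₀
  have hcfin : c < ⊤ := lt_of_le_of_lt (measure_mono (subset_univ _))
    (by haveI := hPprob x₀; simp)
  -- approximation of indicator of G from below
  set u : ℕ → X → ℝ := fun k x => min 1 (k * Metric.infDist x Gᶜ) with hu
  have hu_cont : ∀ k, Continuous (u k) :=
    fun k => continuous_const.min (continuous_const.mul (Metric.continuous_infDist_pt Gᶜ))
  have hu0 : ∀ k x, 0 ≤ u k x := fun k x =>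
    le_min zero_le_one (mul_nonneg (Nat.cast_nonneg k) Metric.infDist_nonneg)
  have hu1 : ∀ k x, u k x ≤ 1 := fun k x => min_le_left _ _
  have hu_le_ind : ∀ k x, ENNReal.ofReal (u k x) ≤ G.indicator (fun _ => (1:ℝ≥0∞)) x := by
    intro k x
    by_cases hx : x ∈ G
    · simp only [hx, indicator_of_mem]
      calc ENNReal.ofReal (u k x) ≤ ENNReal.ofReal 1 := ENNReal.ofReal_le_ofReal (hu1 k x)
        _ = 1 := ENNReal.ofReal_one
    · have : Metric.infDist x Gᶜ = 0 := Metric.infDist_zero_of_mem (by simpa using hx)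
      simp [hx, hu, this]
  have hu_mono : ∀ x, Monotone fun k => ENNReal.ofReal (u k x) := by
    intro x k l hkl
    apply ENNReal.ofReal_le_ofReal
    exact min_le_min le_rfl (mul_le_mul_of_nonneg_right (Nat.cast_le.mpr hkl)
      Metric.infDist_nonneg)
  have hu_sup : ∀ x, (⨆ k : ℕ, ENNReal.ofReal (u k x)) = G.indicator (fun _ => (1:ℝ≥0∞)) x := by
    intro x
    apply le_antisymm (iSup_le fun k => hu_le_ind k x)
    by_cases hx : x ∈ G
    · simp only [hx, indicator_of_mem]
      have hd : 0 < Metric.infDist x Gᶜ :=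
        (hGo.isClosed_compl.notMem_iff_infDist_pos hGc).mp (by simpa using hx)
      obtain ⟨k, hk⟩ := exists_nat_ge (1 / Metric.infDist x Gᶜ)
      have hk1 : (1:ℝ) ≤ k * Metric.infDist x Gᶜ := by
        rw [div_le_iff₀ hd] at hk
        linarith
      have : u k x = 1 := min_eq_left hk1
      calc (1:ℝ≥0∞) = ENNReal.ofReal (u k x) := by rw [this, ENNReal.ofReal_one]
        _ ≤ ⨆ k : ℕ, ENNReal.ofReal (u k x) := le_iSup (fun k : ℕ => ENNReal.ofReal (u k x)) k
    · simp [hx]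
  -- monotone convergence at x₀, time m
  have hGm : MeasurableSet ((fun ω : ℕ → X => ω m) ⁻¹' G) :=
    hGo.measurableSet.preimage (measurable_pi_apply m)
  have hmeasuk : ∀ k, Measurable fun ω : ℕ → X => ENNReal.ofReal (u k (ω m)) := fun k =>
    (ENNReal.measurable_ofReal.comp (hu_cont k).measurable).comp (measurable_pi_apply m)
  have hmc : (⨆ k : ℕ, ∫⁻ ω, ENNReal.ofReal (u k (ω m)) ∂(P x₀)) = c := by
    rw [← lintegral_iSup hmeasuk]
    · calc ∫⁻ ω, ⨆ k : ℕ, ENNReal.ofReal (u k (ω m)) ∂(P x₀)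
          = ∫⁻ ω, G.indicator (fun _ => (1:ℝ≥0∞)) (ω m) ∂(P x₀) :=
            lintegral_congr fun ω => hu_sup (ω m)
        _ = ∫⁻ ω, ((fun ω : ℕ → X => ω m) ⁻¹' G).indicator (fun _ => (1:ℝ≥0∞)) ω ∂(P x₀) := by
            apply lintegral_congr
            intro ω
            by_cases hω : ω m ∈ G <;> simp [hω]
        _ = c := by rw [lintegral_indicator hGm]; simp [hc]
    · intro k l hkl ω
      exact hu_mono (ω m) hkl
  have hhalf : c / 2 < ⨆ k : ℕ, ∫⁻ ω, ENNReal.ofReal (u k (ω m)) ∂(P x₀) := by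
    rw [hmc]
    exact ENNReal.half_lt_self (ne_of_gt hc0) (ne_of_lt hcfin)
  obtain ⟨k, hk⟩ := lt_iSup_iff.mp hhalf
  -- bundle u k as a bounded continuous function
  set f : X →ᵇ ℝ := BoundedContinuousFunction.ofNormedAddCommGroup (u k) (hu_cont k) 1
    (fun x => by rw [Real.norm_eq_abs, abs_of_nonneg (hu0 k x)]; exact hu1 k x) with hf
  have hfc : (f : X → ℝ) = u k := rfl
  obtain ⟨g, g0, hg⟩ := Stmt13Aux.n_step P hPmeas hPprob hP0 hPstep hfeller m f
    (by rw [hfc]; exact fun x => hu0 k x)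
  -- the open neighbourhood
  set V : Set X := {x | c / 2 < ENNReal.ofReal (g x)} with hV
  have hVopen : IsOpen V := by
    have : V = (fun x => ENNReal.ofReal (g x)) ⁻¹' Ioi (c / 2) := rfl
    rw [this]
    exact isOpen_Ioi.preimage (ENNReal.continuous_ofReal.comp g.continuous)
  have hx₀V : x₀ ∈ V := by
    have := hg x₀
    rw [hfc] at this
    rw [hV, mem_setOf_eq, ← this]
    exact hk
  -- bound the measure of V
  have hRmeas : Measurable (fun x => (P x).map (fun ω : ℕ → X => ω m)) :=
    (Measure.measurable_map _ (measurable_pi_apply m)).comp hPmeas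
  have hkey : ∫⁻ x, ENNReal.ofReal (g x) ∂μ ≤ μ G := by
    calc ∫⁻ x, ENNReal.ofReal (g x) ∂μ
        = ∫⁻ x, ∫⁻ ω, ENNReal.ofReal (f (ω m)) ∂(P x) ∂μ :=
          lintegral_congr fun x => (hg x).symm
      _ ≤ ∫⁻ x, (P x) ((fun ω : ℕ → X => ω m) ⁻¹' G) ∂μ := by
          apply lintegral_mono
          intro x
          calc ∫⁻ ω, ENNReal.ofReal (f (ω m)) ∂(P x)
              ≤ ∫⁻ ω, ((fun ω : ℕ → X => ω m) ⁻¹' G).indicator (fun _ => (1:ℝ≥0∞)) ω ∂(P x) := by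
                apply lintegral_mono
                intro ω
                have := hu_le_ind k (ω m)
                rw [← hfc] at this
                by_cases hω : ω m ∈ G
                · simpa [hω] using this
                · simpa [hω] using this
            _ = (P x) ((fun ω : ℕ → X => ω m) ⁻¹' G) := by
                rw [lintegral_indicator hGm]; simp
      _ = ∫⁻ x, ((P x).map (fun ω : ℕ → X => ω m)) G ∂μ := by
          apply lintegral_congr
          intro x
          rw [Measure.map_apply (measurable_pi_apply m) hGo.measurableSet]
      _ = (μ.bind (fun x => (P x).map (fun ω : ℕ → X => ω m))) G :=
          (Measure.bind_apply hGo.measurableSet hRmeas.aemeasurable).symm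
      _ = μ G := by rw [Stmt13Aux.bind_eval_eq P hPmeas hP0 hPstep μ hinv m]
  have hgmeas : Measurable fun x => ENNReal.ofReal (g x) :=
    ENNReal.measurable_ofReal.comp g.continuous.measurable
  have hVbound : c / 2 * μ V ≤ μ G := by
    calc c / 2 * μ V = ∫⁻ _ in V, c / 2 ∂μ := (setLIntegral_const V (c / 2)).symm
      _ ≤ ∫⁻ x in V, ENNReal.ofReal (g x) ∂μ :=
          setLIntegral_mono hgmeas fun x hx => le_of_lt hx
      _ ≤ ∫⁻ x, ENNReal.ofReal (g x) ∂μ := setLIntegral_le_lintegral V _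
      _ ≤ μ G := hkey
  have hμV : μ V < ⊤ := by
    by_contra hcon
    push_neg at hcon
    have hVtop : μ V = ⊤ := top_le_iff.mp hcon
    rw [hVtop, ENNReal.mul_top (by
      simp only [ne_eq, ENNReal.div_eq_zero_iff]
      push_neg
      exact ⟨ne_of_gt hc0, by norm_num⟩)] at hVbound
    exact absurd (top_le_iff.mp hVbound).symm (ne_of_lt hGfin).symm
  exact ⟨V, hVopen.mem_nhds hx₀V, hμV⟩
end

section
/- Let Y be a topologically irreducible, topologically recurrent, weak Feller Markov chain on a Polish space X. Then for every x ∈ X and every non-empty open set G ⊂ X, P_x(τ'_G(Y) < ∞) = 1. -/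
open MeasureTheory Set Metric
open scoped ENNReal BoundedContinuousFunction

set_option linter.unusedSectionVars false

namespace Stmt14Aux

variable {X : Type*} [TopologicalSpace X] [PolishSpace X] [MeasurableSpace X] [BorelSpace X]

def shiftPath (ω : ℕ → X) : ℕ → X := fun n => ω (n + 1)

def consPath (y : X) (η : ℕ → X) : ℕ → X := fun i => Nat.casesOn i y η

def hit (Γ : Set X) : Set (ℕ → X) := {ω | ∃ n, 1 ≤ n ∧ ω n ∈ Γ}

def avoidAfter (Γ : Set X) (n : ℕ) : Set (ℕ → X) := {ω | ∀ j, n < j → ω j ∉ Γ}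

noncomputable def UU (P : X → Measure (ℕ → X)) (Γ : Set X) (y : X) : ℝ≥0∞ :=
  P y (avoidAfter Γ 0)

lemma measurable_shiftPath : Measurable (shiftPath (X := X)) :=
  measurable_pi_lambda _ fun n => measurable_pi_apply (n + 1)

lemma measurable_consPath (y : X) : Measurable (consPath (X := X) y) := by
  apply measurable_pi_lambda
  intro i
  cases i with
  | zero => exact measurable_const
  | succ k => exact measurable_pi_apply k

lemma measurableSet_avoidAfter {Γ : Set X} (hΓ : MeasurableSet Γ) (n : ℕ) :
    MeasurableSet (avoidAfter Γ n) := by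
  have : avoidAfter Γ n = ⋂ (j : ℕ) (_ : n < j), (fun ω : ℕ → X => ω j) ⁻¹' Γᶜ := by
    ext ω; simp [avoidAfter]
  rw [this]
  exact MeasurableSet.iInter fun j => MeasurableSet.iInter fun _ =>
    (measurable_pi_apply j) hΓ.compl

lemma measurableSet_hit {Γ : Set X} (hΓ : MeasurableSet Γ) : MeasurableSet (hit Γ) := by
  have : hit Γ = ⋃ (n : ℕ) (_ : 1 ≤ n), (fun ω : ℕ → X => ω n) ⁻¹' Γ := by
    ext ω; simp [hit]
  rw [this]
  exact MeasurableSet.iUnion fun n => MeasurableSet.iUnion fun _ => (measurable_pi_apply n) hΓ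

lemma compl_hit (Γ : Set X) : (hit Γ)ᶜ = avoidAfter Γ 0 := by
  ext ω
  simp only [hit, avoidAfter, mem_compl_iff, mem_setOf_eq]
  constructor
  · intro h j hj hmem; exact h ⟨j, hj, hmem⟩
  · rintro h ⟨n, h1, h2⟩; exact h n h1 h2

lemma measurable_UU {P : X → Measure (ℕ → X)} (hPmeas : Measurable P) {Γ : Set X}
    (hΓ : MeasurableSet Γ) : Measurable (UU P Γ) :=
  (Measure.measurable_coe (measurableSet_avoidAfter hΓ 0)).comp hPmeas

lemma ae_eval_zero {P : X → Measure (ℕ → X)} (hPprob : ∀ x, IsProbabilityMeasure (P x))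
    (hP0 : ∀ x, (P x).map (fun ω => ω 0) = Measure.dirac x) (y : X) :
    ∀ᵐ ω ∂(P y), ω 0 = y := by
  haveI := hPprob y
  have hsm : MeasurableSet ({y} : Set X) := measurableSet_singleton y
  have h1 : P y {ω : ℕ → X | ω 0 = y} = 1 := by
    have := Measure.map_apply (measurable_pi_apply (X := fun _ : ℕ => X) 0) hsm (μ := P y)
    rw [hP0 y] at this
    have h2 : ((fun ω : ℕ → X => ω 0) ⁻¹' {y}) = {ω : ℕ → X | ω 0 = y} := by
      ext ω; simp
    rw [h2] at this
    rw [← this, Measure.dirac_apply' _ hsm]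
    simp
  have hms : MeasurableSet {ω : ℕ → X | ω 0 = y} := by
    have : {ω : ℕ → X | ω 0 = y} = (fun ω : ℕ → X => ω 0) ⁻¹' {y} := by ext ω; simp
    rw [this]; exact (measurable_pi_apply 0) hsm
  have := prob_compl_eq_zero_iff hms |>.mpr h1
  rw [ae_iff]
  convert this using 2
  rfl


theorem markov (P : X → Measure (ℕ → X)) (hPmeas : Measurable P)
    (hPprob : ∀ x, IsProbabilityMeasure (P x))
    (hP0 : ∀ x, (P x).map (fun ω => ω 0) = Measure.dirac x)
    (hPstep : ∀ x, (P x).map (fun ω n => ω (n + 1)) = ((P x).map (fun ω => ω 1)).bind P)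
    {Γ : Set X} (hΓ : MeasurableSet Γ) :
    ∀ (n : ℕ) (μ : Measure X) (S : Set (ℕ → X)), MeasurableSet S →
      (∀ ω ω', (∀ i, i ≤ n → ω i = ω' i) → ω ∈ S → ω' ∈ S) →
      (μ.bind P) (S ∩ avoidAfter Γ n) =
        ∫⁻ ω, S.indicator (fun ω => UU P Γ (ω n)) ω ∂(μ.bind P) := by
  intro n
  induction n with
  | zero =>
    intro μ S hS hdep
    have hind : Measurable (fun ω : ℕ → X => S.indicator (fun ω => UU P Γ (ω 0)) ω) :=
      ((measurable_UU hPmeas hΓ).comp (measurable_pi_apply 0)).indicator hS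
    rw [Measure.bind_apply (hS.inter (measurableSet_avoidAfter hΓ 0)) hPmeas.aemeasurable,
      Measure.lintegral_bind hPmeas.aemeasurable hind.aemeasurable]
    refine lintegral_congr fun y => ?_
    haveI := hPprob y
    have hae := ae_eval_zero hPprob hP0 y
    by_cases hc : (fun _ : ℕ => y) ∈ S
    · have hmem : ∀ ω : ℕ → X, ω 0 = y → ω ∈ S := by
        intro ω h0
        refine hdep (fun _ => y) ω (fun i hi => ?_) hc
        have : i = 0 := Nat.le_zero.mp hi
        subst this; exact h0.symm
      have h1 : P y (S ∩ avoidAfter Γ 0) = P y (avoidAfter Γ 0) := by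
        refine measure_congr ?_
        refine Filter.eventuallyEq_set.mpr ?_
        filter_upwards [hae] with ω h0
        exact ⟨fun h => h.2, fun h => ⟨hmem ω h0, h⟩⟩
      rw [h1]
      have h2 : ∫⁻ ω, S.indicator (fun ω => UU P Γ (ω 0)) ω ∂(P y)
          = ∫⁻ _ω, UU P Γ y ∂(P y) := by
        refine lintegral_congr_ae ?_
        filter_upwards [hae] with ω h0
        rw [Set.indicator_of_mem (hmem ω h0), h0]
      rw [h2, lintegral_const, measure_univ, mul_one]
      rfl
    · have hmem : ∀ ω : ℕ → X, ω 0 = y → ω ∉ S := by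
        intro ω h0 hS'
        exact hc (hdep ω (fun _ => y) (fun i hi => by
          have : i = 0 := Nat.le_zero.mp hi
          subst this; exact h0) hS')
      have h1 : P y (S ∩ avoidAfter Γ 0) = 0 := by
        have : P y (S ∩ avoidAfter Γ 0) = P y (∅ : Set (ℕ → X)) := by
          refine measure_congr ?_
          refine Filter.eventuallyEq_set.mpr ?_
          filter_upwards [hae] with ω h0
          simp only [mem_empty_iff_false, iff_false]
          exact fun h => hmem ω h0 h.1
        rw [this, measure_empty]
      rw [h1]
      have h2 : ∫⁻ ω, S.indicator (fun ω => UU P Γ (ω 0)) ω ∂(P y)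
          = ∫⁻ _ω, (0 : ℝ≥0∞) ∂(P y) := by
        refine lintegral_congr_ae ?_
        filter_upwards [hae] with ω h0
        rw [Set.indicator_of_notMem (hmem ω h0)]
      rw [h2, lintegral_const, zero_mul]
  | succ n ih =>
    intro μ S hS hdep
    have hind : Measurable (fun ω : ℕ → X => S.indicator (fun ω => UU P Γ (ω (n+1))) ω) :=
      ((measurable_UU hPmeas hΓ).comp (measurable_pi_apply (n+1))).indicator hS
    rw [Measure.bind_apply (hS.inter (measurableSet_avoidAfter hΓ (n+1))) hPmeas.aemeasurable,
      Measure.lintegral_bind hPmeas.aemeasurable hind.aemeasurable]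
    refine lintegral_congr fun y => ?_
    haveI := hPprob y
    have hae := ae_eval_zero hPprob hP0 y
    set S' : Set (ℕ → X) := consPath y ⁻¹' S with hS'def
    have hS' : MeasurableSet S' := (measurable_consPath y) hS
    have hdep' : ∀ η η', (∀ i, i ≤ n → η i = η' i) → η ∈ S' → η' ∈ S' := by
      intro η η' hagree hη
      refine hdep (consPath y η) (consPath y η') (fun i hi => ?_) hη
      cases i with
      | zero => rfl
      | succ k => exact hagree k (Nat.succ_le_succ_iff.mp hi)
    have hcons : ∀ ω : ℕ → X, ω 0 = y → consPath y (shiftPath ω) = ω := by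
      intro ω h0
      funext i
      cases i with
      | zero => exact h0.symm
      | succ k => rfl
    have hA : ∀ ω : ℕ → X, (ω ∈ avoidAfter Γ (n+1) ↔ shiftPath ω ∈ avoidAfter Γ n) := by
      intro ω
      constructor
      · intro H j hj
        exact H (j+1) (by omega)
      · intro H j hj
        have hj1 : j - 1 + 1 = j := by omega
        have := H (j-1) (by omega)
        rwa [shiftPath, hj1] at this
    have step1 : P y (S ∩ avoidAfter Γ (n+1))
        = P y (shiftPath ⁻¹' (S' ∩ avoidAfter Γ n)) := by
      refine measure_congr (Filter.eventuallyEq_set.mpr ?_)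
      filter_upwards [hae] with ω h0
      have hSiff : ω ∈ S ↔ shiftPath ω ∈ S' := by
        rw [hS'def, mem_preimage, hcons ω h0]
      constructor
      · rintro ⟨h1, h2⟩; exact ⟨hSiff.mp h1, (hA ω).mp h2⟩
      · rintro ⟨h1, h2⟩; exact ⟨hSiff.mpr h1, (hA ω).mpr h2⟩
    have hmapstep : (P y).map shiftPath = ((P y).map (fun ω => ω 1)).bind P := hPstep y
    have step2 : P y (shiftPath ⁻¹' (S' ∩ avoidAfter Γ n))
        = (((P y).map (fun ω => ω 1)).bind P) (S' ∩ avoidAfter Γ n) := by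
      rw [← hmapstep,
        Measure.map_apply measurable_shiftPath (hS'.inter (measurableSet_avoidAfter hΓ n))]
    have step3 := ih ((P y).map (fun ω => ω 1)) S' hS' hdep'
    have hind' : Measurable (fun η : ℕ → X => S'.indicator (fun η => UU P Γ (η n)) η) :=
      ((measurable_UU hPmeas hΓ).comp (measurable_pi_apply n)).indicator hS'
    have step4 : ∫⁻ η, S'.indicator (fun η => UU P Γ (η n)) η
          ∂(((P y).map (fun ω => ω 1)).bind P)
        = ∫⁻ ω, S'.indicator (fun η => UU P Γ (η n)) (shiftPath ω) ∂(P y) := by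
      rw [← hmapstep, lintegral_map hind' measurable_shiftPath]
    have step5 : ∫⁻ ω, S'.indicator (fun η => UU P Γ (η n)) (shiftPath ω) ∂(P y)
        = ∫⁻ ω, S.indicator (fun ω => UU P Γ (ω (n+1))) ω ∂(P y) := by
      refine lintegral_congr_ae ?_
      filter_upwards [hae] with ω h0
      have hSiff : ω ∈ S ↔ shiftPath ω ∈ S' := by
        rw [hS'def, mem_preimage, hcons ω h0]
      by_cases hω : ω ∈ S
      · rw [Set.indicator_of_mem (hSiff.mp hω), Set.indicator_of_mem hω]
        rfl
      · rw [Set.indicator_of_notMem (fun h => hω (hSiff.mpr h)),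
          Set.indicator_of_notMem hω]
    rw [step1, step2, step3, step4, step5]


/-- functions representable as increasing sups of bounded continuous functions with values
in `[0,1]`. -/
def Rep (f : X → ℝ≥0∞) : Prop :=
  ∃ χ : ℕ → X →ᵇ ℝ, Monotone χ ∧ (∀ m x, χ m x ∈ Icc (0:ℝ) 1) ∧
    ∀ x, f x = ⨆ m, ENNReal.ofReal (χ m x)

lemma Rep.isOpen_lt {f : X → ℝ≥0∞} (hf : Rep f) (c : ℝ≥0∞) : IsOpen {x | c < f x} := by
  obtain ⟨χ, -, -, hval⟩ := hf
  have : {x | c < f x} = ⋃ m, {x | c < ENNReal.ofReal (χ m x)} := by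
    ext x
    simp only [mem_setOf_eq, mem_iUnion, hval x, lt_iSup_iff]
  rw [this]
  refine isOpen_iUnion fun m => ?_
  have : Continuous fun x => ENNReal.ofReal (χ m x) :=
    ENNReal.continuous_ofReal.comp (χ m).continuous
  exact this.isOpen_preimage _ isOpen_Ioi

lemma rep_zero : Rep (fun _ : X => (0 : ℝ≥0∞)) := by
  refine ⟨fun _ => 0, monotone_const, fun m x => by simp, fun x => ?_⟩
  simp

lemma rep_step (P : X → Measure (ℕ → X))
    (hPprob : ∀ x, IsProbabilityMeasure (P x))
    (hfeller : ∀ f : X →ᵇ ℝ, Continuous fun x => ∫ ω, f (ω 1) ∂(P x))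
    {G : Set X} (hGopen : IsOpen G) (hGc : Gᶜ.Nonempty)
    {f : X → ℝ≥0∞} (hf : Rep f) :
    Rep (fun x => ∫⁻ y, max (G.indicator 1 y) (f y) ∂((P x).map (fun ω => ω 1))) := by
  letI := TopologicalSpace.upgradeIsCompletelyMetrizable X
  obtain ⟨χ, hχmono, hχicc, hχval⟩ := hf
  -- the inner approximations of the indicator of G
  have hcont : ∀ m : ℕ, Continuous fun x => min 1 ((m : ℝ) * infDist x Gᶜ) :=
    fun m => continuous_const.min (continuous_const.mul (continuous_infDist_pt _))
  set φ : ℕ → X →ᵇ ℝ := fun m =>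
    BoundedContinuousFunction.ofNormedAddCommGroup _ (hcont m) 1 (by
      intro x
      have h0 : (0:ℝ) ≤ (m : ℝ) * infDist x Gᶜ :=
        mul_nonneg (Nat.cast_nonneg m) infDist_nonneg
      rw [Real.norm_eq_abs, abs_le]
      constructor
      · have : (0:ℝ) ≤ min 1 ((m : ℝ) * infDist x Gᶜ) := le_min zero_le_one h0
        linarith
      · exact min_le_left _ _) with hφdef
  have hφapp : ∀ m x, φ m x = min 1 ((m : ℝ) * infDist x Gᶜ) := fun m x => rfl
  have hφicc : ∀ m x, φ m x ∈ Icc (0:ℝ) 1 := by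
    intro m x
    rw [hφapp]
    exact ⟨le_min zero_le_one (mul_nonneg (Nat.cast_nonneg m) infDist_nonneg), min_le_left _ _⟩
  have hφmono : Monotone φ := by
    intro m m' hm
    intro x
    show φ m x ≤ φ m' x
    rw [hφapp, hφapp]
    exact min_le_min le_rfl
      (mul_le_mul_of_nonneg_right (Nat.cast_le.mpr hm) infDist_nonneg)
  have hφsup : ∀ x, (⨆ m, ENNReal.ofReal (φ m x)) = G.indicator 1 x := by
    intro x
    by_cases hx : x ∈ G
    · have hpos : 0 < infDist x Gᶜ :=
        (hGopen.isClosed_compl.notMem_iff_infDist_pos hGc).mp (by simpa using hx)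
      obtain ⟨m, hm⟩ := exists_nat_gt (infDist x Gᶜ)⁻¹
      have hge : (1:ℝ) ≤ (m:ℝ) * infDist x Gᶜ := by
        rw [← inv_mul_cancel₀ (ne_of_gt hpos)]
        exact mul_le_mul_of_nonneg_right hm.le hpos.le
      refine le_antisymm ?_ ?_
      · refine iSup_le fun m' => ?_
        rw [Set.indicator_of_mem hx]
        simp only [Pi.one_apply]
        exact ENNReal.ofReal_le_ofReal_iff'.mpr (Or.inl (hφicc m' x).2) |>.trans (by simp)
      · rw [Set.indicator_of_mem hx]
        simp only [Pi.one_apply]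
        refine le_iSup_of_le m ?_
        rw [hφapp, min_eq_left hge]
        simp
    · have h0 : infDist x Gᶜ = 0 := infDist_zero_of_mem (by simpa using hx)
      rw [Set.indicator_of_notMem hx]
      refine le_antisymm ?_ zero_le
      refine iSup_le fun m => ?_
      rw [hφapp, h0, mul_zero]
      norm_num
  set ψ : ℕ → X →ᵇ ℝ := fun m => φ m ⊔ χ m with hψdef
  have hψapp : ∀ m x, ψ m x = max (φ m x) (χ m x) := fun m x => rfl
  have hψicc : ∀ m x, ψ m x ∈ Icc (0:ℝ) 1 := fun m x =>
    ⟨le_max_of_le_left (hφicc m x).1, max_le (hφicc m x).2 (hχicc m x).2⟩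
  have hψmono : Monotone ψ := fun m m' h => sup_le_sup (hφmono h) (hχmono h)
  have hψptmono : ∀ {m m'}, m ≤ m' → ∀ x, ψ m x ≤ ψ m' x := by
    intro m m' h x
    exact hψmono h x
  have hkey : ∀ y, max (G.indicator 1 y) (f y) = ⨆ m, ENNReal.ofReal (ψ m y) := by
    intro y
    have hofmax : ∀ m, ENNReal.ofReal (ψ m y)
        = ENNReal.ofReal (φ m y) ⊔ ENNReal.ofReal (χ m y) := by
      intro m
      rw [hψapp]
      exact Monotone.map_max (fun a b hab => ENNReal.ofReal_le_ofReal hab)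
    calc max (G.indicator 1 y) (f y)
        = (⨆ m, ENNReal.ofReal (φ m y)) ⊔ (⨆ m, ENNReal.ofReal (χ m y)) := by
          rw [hφsup y, hχval y]
      _ = ⨆ m, (ENNReal.ofReal (φ m y) ⊔ ENNReal.ofReal (χ m y)) := iSup_sup_eq.symm
      _ = ⨆ m, ENNReal.ofReal (ψ m y) := by simp_rw [hofmax]
  have hmeasev : Measurable fun ω : ℕ → X => ω 1 := measurable_pi_apply 1
  have hμprob : ∀ x : X, IsProbabilityMeasure ((P x).map fun ω => ω 1) := fun x => by
    haveI := hPprob x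
    exact Measure.isProbabilityMeasure_map hmeasev.aemeasurable
  have hmapint : ∀ (m : ℕ) (x : X),
      ∫ y, ψ m y ∂((P x).map fun ω => ω 1) = ∫ ω, ψ m (ω 1) ∂(P x) := fun m x =>
    integral_map hmeasev.aemeasurable (ψ m).continuous.measurable.aestronglyMeasurable
  have hcont' : ∀ m : ℕ, Continuous fun x => ∫ y, ψ m y ∂((P x).map fun ω => ω 1) := by
    intro m
    simp_rw [hmapint m]
    exact hfeller (ψ m)
  have hbd : ∀ (m : ℕ) (x : X), ∫ y, ψ m y ∂((P x).map fun ω => ω 1) ∈ Icc (0:ℝ) 1 := by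
    intro m x
    haveI := hμprob x
    constructor
    · exact integral_nonneg fun y => (hψicc m y).1
    · calc ∫ y, ψ m y ∂((P x).map fun ω => ω 1)
          ≤ ∫ _y, (1:ℝ) ∂((P x).map fun ω => ω 1) :=
            integral_mono ((ψ m).integrable _) (integrable_const 1)
              (fun y => (hψicc m y).2)
        _ = 1 := by simp
  set χ' : ℕ → X →ᵇ ℝ := fun m =>
    BoundedContinuousFunction.ofNormedAddCommGroup _ (hcont' m) 1 (by
      intro x
      rw [Real.norm_eq_abs, abs_le]
      have := hbd m x
      exact ⟨by linarith [this.1], this.2⟩) with hχ'def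
  have hχ'app : ∀ m x, χ' m x = ∫ y, ψ m y ∂((P x).map fun ω => ω 1) := fun m x => rfl
  refine ⟨χ', ?_, ?_, ?_⟩
  · intro m m' h
    intro x
    show χ' m x ≤ χ' m' x
    rw [hχ'app, hχ'app]
    exact integral_mono ((ψ m).integrable _) ((ψ m').integrable _) (fun y => hψmono h y)
  · intro m x
    rw [hχ'app]
    exact hbd m x
  · intro x
    beta_reduce
    have h1 : ∫⁻ y, max (G.indicator 1 y) (f y) ∂((P x).map fun ω => ω 1)
        = ∫⁻ y, ⨆ m, ENNReal.ofReal (ψ m y) ∂((P x).map fun ω => ω 1) :=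
      lintegral_congr hkey
    rw [h1, lintegral_iSup
      (fun m => (ψ m).continuous.measurable.ennreal_ofReal)
      (fun m m' h y => ENNReal.ofReal_le_ofReal (hψmono h y))]
    refine iSup_congr fun m => ?_
    rw [hχ'app,
      ← ofReal_integral_eq_lintegral_ofReal ((ψ m).integrable _)
        (Filter.Eventually.of_forall fun y => (hψicc m y).1)]



noncomputable def gseq (P : X → Measure (ℕ → X)) (G : Set X) : ℕ → X → ℝ≥0∞
  | 0 => fun _ => 0
  | (N+1) => fun x =>
      ∫⁻ y, max (G.indicator 1 y) (gseq P G N y) ∂((P x).map (fun ω => ω 1))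

lemma gseq_eq (P : X → Measure (ℕ → X)) (hPmeas : Measurable P)
    (hPprob : ∀ x, IsProbabilityMeasure (P x))
    (hP0 : ∀ x, (P x).map (fun ω => ω 0) = Measure.dirac x)
    (hPstep : ∀ x, (P x).map (fun ω n => ω (n + 1)) = ((P x).map (fun ω => ω 1)).bind P)
    {G : Set X} (hG : MeasurableSet G) :
    ∀ N x, gseq P G N x = P x {ω | ∃ n, 1 ≤ n ∧ n ≤ N ∧ ω n ∈ G} := by
  intro N
  induction N with
  | zero =>
    intro x
    have hempty : {ω : ℕ → X | ∃ n, 1 ≤ n ∧ n ≤ 0 ∧ ω n ∈ G} = ∅ := by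
      ext ω
      simp only [mem_setOf_eq, mem_empty_iff_false, iff_false]
      rintro ⟨n, h1, h2, -⟩
      omega
    rw [hempty, measure_empty]
    rfl
  | succ N ih =>
    intro x
    haveI := hPprob x
    have hsetshift : {ω : ℕ → X | ∃ n, 1 ≤ n ∧ n ≤ N + 1 ∧ ω n ∈ G}
        = shiftPath ⁻¹' {η | ∃ n, n ≤ N ∧ η n ∈ G} := by
      ext ω
      constructor
      · rintro ⟨n, h1, h2, h3⟩
        refine ⟨n - 1, by omega, ?_⟩
        show ω (n - 1 + 1) ∈ G
        have : n - 1 + 1 = n := by omega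
        rwa [this]
      · rintro ⟨n, h1, h2⟩
        exact ⟨n + 1, by omega, by omega, h2⟩
    have hTmeas : MeasurableSet {η : ℕ → X | ∃ n, n ≤ N ∧ η n ∈ G} := by
      have : {η : ℕ → X | ∃ n, n ≤ N ∧ η n ∈ G}
          = ⋃ (n : ℕ) (_ : n ≤ N), (fun η : ℕ → X => η n) ⁻¹' G := by
        ext η; simp
      rw [this]
      exact MeasurableSet.iUnion fun n => MeasurableSet.iUnion fun _ =>
        (measurable_pi_apply n) hG
    rw [hsetshift, ← Measure.map_apply measurable_shiftPath hTmeas]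
    have hstep : (P x).map shiftPath = ((P x).map (fun ω => ω 1)).bind P := hPstep x
    rw [hstep, Measure.bind_apply hTmeas hPmeas.aemeasurable]
    have hker : ∀ y : X, P y {η : ℕ → X | ∃ n, n ≤ N ∧ η n ∈ G}
        = max (G.indicator 1 y) (gseq P G N y) := by
      intro y
      haveI := hPprob y
      have h0G : P y {η : ℕ → X | η 0 ∈ G} = G.indicator 1 y := by
        rw [show {η : ℕ → X | η 0 ∈ G} = (fun η : ℕ → X => η 0) ⁻¹' G from rfl,
          ← Measure.map_apply (measurable_pi_apply 0) hG, hP0 y, Measure.dirac_apply' _ hG]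
      have hsplit : {η : ℕ → X | ∃ n, n ≤ N ∧ η n ∈ G}
          = {η : ℕ → X | η 0 ∈ G} ∪ {η | ∃ n, 1 ≤ n ∧ n ≤ N ∧ η n ∈ G} := by
        ext η
        constructor
        · rintro ⟨n, h1, h2⟩
          rcases Nat.eq_zero_or_pos n with h | h
          · left; rwa [h] at h2
          · right; exact ⟨n, h, h1, h2⟩
        · rintro (h | ⟨n, h1, h2, h3⟩)
          · exact ⟨0, Nat.zero_le _, h⟩
          · exact ⟨n, h2, h3⟩
      by_cases hy : y ∈ G
      · have hval1 : P y {η : ℕ → X | ∃ n, n ≤ N ∧ η n ∈ G} = 1 := by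
          refine le_antisymm prob_le_one ?_
          calc (1 : ℝ≥0∞) = P y {η : ℕ → X | η 0 ∈ G} := by
                rw [h0G, Set.indicator_of_mem hy]; rfl
            _ ≤ _ := by rw [hsplit]; exact measure_mono subset_union_left
        rw [hval1, Set.indicator_of_mem hy]
        have hle1 : gseq P G N y ≤ 1 := by rw [ih y]; exact prob_le_one
        simp only [Pi.one_apply]
        rw [max_eq_left hle1]
      · have hnull : P y {η : ℕ → X | η 0 ∈ G} = 0 := by
          rw [h0G, Set.indicator_of_notMem hy]
        have hval2 : P y {η : ℕ → X | ∃ n, n ≤ N ∧ η n ∈ G}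
            = P y {η : ℕ → X | ∃ n, 1 ≤ n ∧ n ≤ N ∧ η n ∈ G} := by
          rw [hsplit]
          refine le_antisymm ?_ (measure_mono subset_union_right)
          calc P y (_ ∪ _) ≤ P y {η : ℕ → X | η 0 ∈ G}
                + P y {η : ℕ → X | ∃ n, 1 ≤ n ∧ n ≤ N ∧ η n ∈ G} := measure_union_le _ _
            _ = _ := by rw [hnull, zero_add]
        rw [hval2, ← ih y, Set.indicator_of_notMem hy, max_eq_right zero_le]
    show (∫⁻ y, max (G.indicator 1 y) (gseq P G N y) ∂((P x).map (fun ω => ω 1))) = _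
    exact lintegral_congr fun y => (hker y).symm

lemma gseq_sup (P : X → Measure (ℕ → X)) (hPmeas : Measurable P)
    (hPprob : ∀ x, IsProbabilityMeasure (P x))
    (hP0 : ∀ x, (P x).map (fun ω => ω 0) = Measure.dirac x)
    (hPstep : ∀ x, (P x).map (fun ω n => ω (n + 1)) = ((P x).map (fun ω => ω 1)).bind P)
    {G : Set X} (hG : MeasurableSet G) (x : X) :
    (⨆ N, gseq P G N x) = P x (hit G) := by
  have heq := gseq_eq P hPmeas hPprob hP0 hPstep hG
  simp_rw [heq]
  have hmono : Monotone fun N => {ω : ℕ → X | ∃ n, 1 ≤ n ∧ n ≤ N ∧ ω n ∈ G} := by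
    intro N M hNM ω
    rintro ⟨n, h1, h2, h3⟩
    exact ⟨n, h1, h2.trans hNM, h3⟩
  rw [← Monotone.measure_iUnion hmono]
  congr 1
  ext ω
  simp only [mem_iUnion, mem_setOf_eq, hit]
  constructor
  · rintro ⟨N, n, h1, h2, h3⟩; exact ⟨n, h1, h3⟩
  · rintro ⟨n, h1, h3⟩; exact ⟨n, n, h1, le_rfl, h3⟩


noncomputable def cnt (V : Set X) (η : ℕ → X) : ℕ → ℕ
  | 0 => V.indicator (fun _ => 1) (η 0)
  | (n+1) => cnt V η n + V.indicator (fun _ => 1) (η (n+1))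

lemma ind_le_one (V : Set X) (y : X) : V.indicator (fun _ => (1:ℕ)) y ≤ 1 := by
  by_cases h : y ∈ V
  · rw [Set.indicator_of_mem h]
  · rw [Set.indicator_of_notMem h]; omega

lemma ind_of_mem {V : Set X} {y : X} (h : y ∈ V) : V.indicator (fun _ => (1:ℕ)) y = 1 :=
  Set.indicator_of_mem h _

lemma ind_pos_mem {V : Set X} {y : X} (h : 1 ≤ V.indicator (fun _ => (1:ℕ)) y) : y ∈ V := by
  by_contra hc
  rw [Set.indicator_of_notMem hc] at h
  omega

lemma cnt_mono (V : Set X) (η : ℕ → X) : Monotone (cnt V η) :=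
  monotone_nat_of_le_succ fun n => Nat.le_add_right _ _

lemma cnt_le (V : Set X) (η : ℕ → X) : ∀ n, cnt V η n ≤ n + 1 := by
  intro n
  induction n with
  | zero => exact ind_le_one V (η 0)
  | succ n ih =>
    have := ind_le_one V (η (n+1))
    show cnt V η n + _ ≤ _
    omega

lemma visit_le_cnt {V : Set X} {η : ℕ → X} {j : ℕ} (h : η j ∈ V) : 1 ≤ cnt V η j := by
  cases j with
  | zero => show 1 ≤ V.indicator _ _; rw [ind_of_mem h]
  | succ t => show 1 ≤ cnt V η t + V.indicator _ _; rw [ind_of_mem h]; omega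

lemma cnt_lt_of_visit {V : Set X} {η : ℕ → X} {m j : ℕ} (hmj : m < j) (h : η j ∈ V) :
    cnt V η m < cnt V η j := by
  obtain ⟨t, rfl⟩ : ∃ t, j = t + 1 := ⟨j - 1, by omega⟩
  have h1 : cnt V η m ≤ cnt V η t := cnt_mono V η (by omega)
  show cnt V η m < cnt V η t + V.indicator _ _
  rw [ind_of_mem h]
  omega

lemma exists_cnt {V : Set X} {η : ℕ → X} :
    ∀ n r, r + 1 ≤ cnt V η n → ∃ m, m ≤ n ∧ η m ∈ V ∧ cnt V η m = r + 1 := by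
  intro n
  induction n with
  | zero =>
    intro r hr
    have h1 := ind_le_one V (η 0)
    have h0 : cnt V η 0 = V.indicator (fun _ => 1) (η 0) := rfl
    rw [h0] at hr
    have hr0 : r = 0 := by omega
    refine ⟨0, le_rfl, ind_pos_mem (by omega), ?_⟩
    rw [h0]
    omega
  | succ n ih =>
    intro r hr
    by_cases h : r + 1 ≤ cnt V η n
    · obtain ⟨m, hm, hmV, hmc⟩ := ih r h
      exact ⟨m, hm.trans (Nat.le_succ n), hmV, hmc⟩
    · push_neg at h
      have hs : cnt V η (n+1) = cnt V η n + V.indicator (fun _ => 1) (η (n+1)) := rfl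
      have h1 := ind_le_one V (η (n+1))
      have hind : V.indicator (fun _ => (1:ℕ)) (η (n+1)) = 1 := by omega
      refine ⟨n+1, le_rfl, ind_pos_mem (by omega), by omega⟩

lemma cnt_unbounded {V : Set X} {η : ℕ → X} (h : ∀ m, ∃ j, m ≤ j ∧ η j ∈ V) :
    ∀ r, ∃ n, r + 1 ≤ cnt V η n := by
  intro r
  induction r with
  | zero =>
    obtain ⟨j, -, hj⟩ := h 0
    exact ⟨j, visit_le_cnt hj⟩
  | succ r ih =>
    obtain ⟨n, hn⟩ := ih
    obtain ⟨j, hj1, hj2⟩ := h (n+1)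
    refine ⟨j, ?_⟩
    have := cnt_lt_of_visit (show n < j by omega) hj2
    omega

lemma cnt_congr {V : Set X} {η η' : ℕ → X} :
    ∀ n, (∀ i, i ≤ n → η i = η' i) → cnt V η n = cnt V η' n := by
  intro n
  induction n with
  | zero => intro h; show V.indicator _ (η 0) = V.indicator _ (η' 0); rw [h 0 le_rfl]
  | succ n ih =>
    intro h
    show cnt V η n + V.indicator _ (η (n+1)) = cnt V η' n + V.indicator _ (η' (n+1))
    rw [ih (fun i hi => h i (hi.trans (Nat.le_succ n))), h (n+1) le_rfl]

lemma measurable_cnt {V : Set X} (hV : MeasurableSet V) (n : ℕ) :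
    Measurable fun η : ℕ → X => cnt V η n := by
  induction n with
  | zero =>
    exact (measurable_const.indicator hV).comp (measurable_pi_apply 0)
  | succ n ih =>
    exact ih.add ((measurable_const.indicator hV).comp (measurable_pi_apply (n+1)))


end Stmt14Aux

open Stmt14Aux

/-- Let `Y` be a topologically irreducible, topologically recurrent, weak Feller Markov chain
on a Polish space `X`, given by its family `P` of path-space laws. Then for every `x ∈ X` and
every non-empty open set `G`, the chain started at `x` hits `G` at some time `n ≥ 1` a.s. -/
theorem stmt14 {X : Type*} [TopologicalSpace X] [PolishSpace X] [MeasurableSpace X]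
    [BorelSpace X]
    (P : X → Measure (ℕ → X)) (hPmeas : Measurable P)
    (hPprob : ∀ x, IsProbabilityMeasure (P x))
    (hP0 : ∀ x, (P x).map (fun ω => ω 0) = Measure.dirac x)
    (hPstep : ∀ x, (P x).map (fun ω n => ω (n + 1)) = ((P x).map (fun ω => ω 1)).bind P)
    (hrec : ∀ G : Set X, IsOpen G → ∀ x ∈ G, (P x) {ω | ∃ n, 1 ≤ n ∧ ω n ∈ G} = 1)
    (hirr : ∀ x : X, ∀ G : Set X, IsOpen G → G.Nonempty →
      0 < (P x) {ω | ∃ n, 1 ≤ n ∧ ω n ∈ G})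
    (hfeller : ∀ f : X →ᵇ ℝ, Continuous fun x => ∫ ω, f (ω 1) ∂(P x)) :
    ∀ x : X, ∀ G : Set X, IsOpen G → G.Nonempty →
      (P x) {ω | ∃ n, 1 ≤ n ∧ ω n ∈ G} = 1 := by
  intro x G hGopen hGne
  classical
  haveI := hPprob x
  by_cases hGuniv : G = Set.univ
  · subst hGuniv
    have huniv : {ω : ℕ → X | ∃ n, 1 ≤ n ∧ ω n ∈ Set.univ} = Set.univ := by
      ext ω
      simp only [mem_univ, and_true, mem_setOf_eq, iff_true]
      exact ⟨1, le_rfl⟩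
    rw [huniv]
    exact measure_univ
  have hGc : Gᶜ.Nonempty := nonempty_compl.mpr hGuniv
  have hGmeas : MeasurableSet G := hGopen.measurableSet
  -- the hitting probability function and its lower semicontinuity
  set h : X → ℝ≥0∞ := fun y => P y (hit G) with hhdef
  have hgsup : ∀ y, (⨆ N, gseq P G N y) = h y := fun y =>
    gseq_sup P hPmeas hPprob hP0 hPstep hGmeas y
  have hrep : ∀ N, Rep (gseq P G N) := by
    intro N
    induction N with
    | zero => exact rep_zero
    | succ N ih => exact rep_step P hPprob hfeller hGopen hGc ih
  have hVopen : ∀ c : ℝ≥0∞, IsOpen {y | c < h y} := by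
    intro c
    have hset : {y | c < h y} = ⋃ N, {y | c < gseq P G N y} := by
      ext y
      simp only [mem_setOf_eq, mem_iUnion, ← hgsup y, lt_iSup_iff]
    rw [hset]
    exact isOpen_iUnion fun N => (hrep N).isOpen_lt c
  have hpos : ∀ y, 0 < h y := fun y => hirr y G hGopen hGne
  -- the path measure of the shifted chain
  set ν : Measure (ℕ → X) := ((P x).map (fun ω => ω 1)).bind P with hνdef
  have hνstep : (P x).map shiftPath = ν := hPstep x
  haveI hνprob : IsProbabilityMeasure ν := by
    rw [← hνstep]
    exact Measure.isProbabilityMeasure_map (measurable_shiftPath).aemeasurable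
  -- recurrence dichotomy: finitely many visits to an open set implies no visits (a.s.)
  have dich : ∀ V : Set X, IsOpen V →
      ν {η | (∃ j, η j ∈ V) ∧ ¬ (∀ m, ∃ j, m ≤ j ∧ η j ∈ V)} = 0 := by
    intro V hV
    have hVmeas := hV.measurableSet
    have hsub : {η : ℕ → X | (∃ j, η j ∈ V) ∧ ¬ (∀ m, ∃ j, m ≤ j ∧ η j ∈ V)}
        ⊆ ⋃ n, ({η : ℕ → X | η n ∈ V} ∩ avoidAfter V n) := by
      rintro η ⟨⟨j0, hj0⟩, hbdd⟩
      push_neg at hbdd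
      obtain ⟨m, hm⟩ := hbdd
      have hlt : ∀ j, η j ∈ V → j < m := by
        intro j hj
        by_contra hc
        push_neg at hc
        exact (hm j hc) hj
      haveI : DecidablePred (fun j => η j ∈ V) := fun _ => Classical.propDecidable _
      have hfg : η (Nat.findGreatest (fun j => η j ∈ V) m) ∈ V :=
        Nat.findGreatest_spec (P := fun j => η j ∈ V) (n := m) (le_of_lt (hlt j0 hj0)) hj0
      have hgr : ∀ j, Nat.findGreatest (fun j => η j ∈ V) m < j → η j ∉ V := by
        intro j hj hjV
        exact Nat.findGreatest_is_greatest hj (hlt j hjV).le hjV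
      exact mem_iUnion.mpr ⟨Nat.findGreatest (fun j => η j ∈ V) m, hfg, hgr⟩
    refine measure_mono_null hsub (measure_iUnion_null fun n => ?_)
    have hmark := markov P hPmeas hPprob hP0 hPstep hVmeas n ((P x).map (fun ω => ω 1))
      {η : ℕ → X | η n ∈ V} ((measurable_pi_apply n) hVmeas)
      (fun ω ω' hagree hω => by
        have := hagree n le_rfl
        simpa [← this] using hω)
    rw [← hνdef] at hmark
    rw [hmark]
    have hzero : ∀ η : ℕ → X,
        Set.indicator {η : ℕ → X | η n ∈ V} (fun η => UU P V (η n)) η = 0 := by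
      intro η
      by_cases hη : η ∈ {η : ℕ → X | η n ∈ V}
      · rw [Set.indicator_of_mem hη]
        have h1 : P (η n) (hit V) = 1 := hrec V hV (η n) hη
        haveI := hPprob (η n)
        have h2 := (prob_compl_eq_zero_iff (measurableSet_hit hVmeas)).mpr h1
        rw [compl_hit] at h2
        exact h2
      · rw [Set.indicator_of_notMem hη]
    simp only [hzero]
    exact lintegral_zero
  -- the increasing family of open sets exhausting X
  set c : ℕ → ℝ≥0∞ := fun k => ((k : ℝ≥0∞) + 2)⁻¹ with hcdef
  set V : ℕ → Set X := fun k => {y | c k < h y} with hVdef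
  have hVo : ∀ k, IsOpen (V k) := fun k => hVopen (c k)
  have hVm : ∀ k, MeasurableSet (V k) := fun k => (hVo k).measurableSet
  -- the event of never hitting G (in the shifted chain)
  set CC : Set (ℕ → X) := {η | ∀ j, η j ∉ G} with hCCdef
  have hCCmeas : MeasurableSet CC := by
    have : CC = ⋂ j, (fun η : ℕ → X => η j) ⁻¹' Gᶜ := by
      ext η; simp [hCCdef]
    rw [this]
    exact MeasurableSet.iInter fun j => (measurable_pi_apply j) hGmeas.compl
  -- main step : on CC there are a.s. no visits to V k
  have hk0 : ∀ k : ℕ, ν (CC ∩ {η | ∃ j, η j ∈ V k}) = 0 := by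
    intro k
    set W : Set X := V k with hWdef
    have hWo : IsOpen W := hVo k
    have hWm : MeasurableSet W := hVm k
    have hUb : ∀ y, y ∈ W → UU P G y ≤ 1 - c k := by
      intro y hy
      haveI := hPprob y
      have h1 : UU P G y = 1 - h y := by
        rw [UU, ← compl_hit, prob_compl_eq_one_sub (measurableSet_hit hGmeas)]
      rw [h1]
      exact tsub_le_tsub_left (le_of_lt hy) 1
    set Inf : Set (ℕ → X) := {η | ∀ m, ∃ j, m ≤ j ∧ η j ∈ W} with hInfdef
    set E : ℕ → ℕ → Set (ℕ → X) := fun r n =>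
      {η | cnt W η n = r + 1 ∧ η n ∈ W ∧ ∀ j, j ≤ n → η j ∉ G} with hEdef
    have hEmeas : ∀ r n, MeasurableSet (E r n) := by
      intro r n
      have : E r n = ((fun η : ℕ → X => cnt W η n) ⁻¹' {r+1})
          ∩ ((fun η : ℕ → X => η n) ⁻¹' W)
          ∩ (⋂ (j : ℕ) (_ : j ≤ n), (fun η : ℕ → X => η j) ⁻¹' Gᶜ) := by
        ext η
        simp only [hEdef, mem_setOf_eq, mem_inter_iff, mem_preimage, mem_iInter,
          mem_singleton_iff, mem_compl_iff]
        tauto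
      rw [this]
      exact (((measurable_cnt hWm n) (measurableSet_singleton (r+1))).inter
        ((measurable_pi_apply n) hWm)).inter
        (MeasurableSet.iInter fun j => MeasurableSet.iInter fun _ =>
          (measurable_pi_apply j) hGmeas.compl)
    have hEdep : ∀ r n, ∀ ω ω' : ℕ → X, (∀ i, i ≤ n → ω i = ω' i) →
        ω ∈ E r n → ω' ∈ E r n := by
      rintro r n ω ω' hagree ⟨h1, h2, h3⟩
      refine ⟨by rw [← cnt_congr n hagree]; exact h1, by rw [← hagree n le_rfl]; exact h2, ?_⟩
      intro j hj
      rw [← hagree j hj]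
      exact h3 j hj
    have hEdisj : ∀ r, Pairwise (Function.onFun Disjoint fun n => E r n) := by
      intro r n n' hnn'
      rcases hnn'.lt_or_gt with hlt | hlt
      · exact Set.disjoint_left.mpr (by
          rintro η ⟨h1, h2, -⟩ ⟨h1', h2', -⟩
          have := cnt_lt_of_visit hlt h2'
          omega)
      · exact Set.disjoint_left.mpr (by
          rintro η ⟨h1, h2, -⟩ ⟨h1', h2', -⟩
          have := cnt_lt_of_visit hlt h2
          omega)
    set Wr : ℕ → Set (ℕ → X) := fun r => ⋃ n, E r n with hWrdef
    have hWrmeas : ∀ r, MeasurableSet (Wr r) := fun r =>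
      MeasurableSet.iUnion fun n => hEmeas r n
    have hWrsum : ∀ r, ν (Wr r) = ∑' n, ν (E r n) := fun r =>
      measure_iUnion (hEdisj r) (fun n => hEmeas r n)
    have hWranti : Antitone Wr := by
      refine antitone_nat_of_succ_le fun r => ?_
      intro η hη
      obtain ⟨n, hn⟩ := mem_iUnion.mp hη
      obtain ⟨h1, h2, h3⟩ := hn
      obtain ⟨m, hm, hmW, hmc⟩ := exists_cnt (V := W) (η := η) n r (by omega)
      exact mem_iUnion.mpr ⟨m, hmc, hmW, fun j hj => h3 j (hj.trans hm)⟩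
    have hWrInter : (⋂ r, Wr r) = CC ∩ Inf := by
      ext η
      constructor
      · intro hη
        have hall : ∀ r : ℕ, ∃ n, cnt W η n = r + 1 ∧ η n ∈ W ∧ ∀ j, j ≤ n → η j ∉ G := by
          intro r
          obtain ⟨n, hn⟩ := mem_iUnion.mp (mem_iInter.mp hη r)
          exact ⟨n, hn⟩
        constructor
        · intro j
          obtain ⟨n, h1, -, h3⟩ := hall j
          have := cnt_le W η n
          exact h3 j (by omega)
        · intro m
          obtain ⟨n, h1, h2, -⟩ := hall m
          have := cnt_le W η n
          exact ⟨n, by omega, h2⟩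
      · rintro ⟨hCCη, hInfη⟩
        refine mem_iInter.mpr fun r => ?_
        obtain ⟨n0, hn0⟩ := cnt_unbounded hInfη r
        obtain ⟨m, hm, hmW, hmc⟩ := exists_cnt (V := W) (η := η) n0 r hn0
        exact mem_iUnion.mpr ⟨m, hmc, hmW, fun j _ => hCCη j⟩
    have hbound : ∀ r, ν (CC ∩ Inf) ≤ (1 - c k) * ν (Wr r) := by
      intro r
      have hsub : CC ∩ Inf ⊆ ⋃ n, (E r n ∩ avoidAfter G n) := by
        rintro η ⟨hCCη, hInfη⟩
        obtain ⟨n0, hn0⟩ := cnt_unbounded hInfη r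
        obtain ⟨m, hm, hmW, hmc⟩ := exists_cnt (V := W) (η := η) n0 r hn0
        exact mem_iUnion.mpr ⟨m, ⟨hmc, hmW, fun j _ => hCCη j⟩, fun j _ => hCCη j⟩
      calc ν (CC ∩ Inf) ≤ ν (⋃ n, (E r n ∩ avoidAfter G n)) := measure_mono hsub
        _ ≤ ∑' n, ν (E r n ∩ avoidAfter G n) := measure_iUnion_le _
        _ ≤ ∑' n, (1 - c k) * ν (E r n) := by
            refine ENNReal.tsum_le_tsum fun n => ?_
            have hmark := markov P hPmeas hPprob hP0 hPstep hGmeas n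
              ((P x).map (fun ω => ω 1)) (E r n) (hEmeas r n) (hEdep r n)
            rw [← hνdef] at hmark
            rw [hmark]
            calc ∫⁻ ω, (E r n).indicator (fun ω => UU P G (ω n)) ω ∂ν
                ≤ ∫⁻ ω, (E r n).indicator (fun _ => 1 - c k) ω ∂ν := by
                  refine lintegral_mono fun ω => ?_
                  by_cases hω : ω ∈ E r n
                  · rw [Set.indicator_of_mem hω, Set.indicator_of_mem hω]
                    exact hUb (ω n) hω.2.1
                  · rw [Set.indicator_of_notMem hω, Set.indicator_of_notMem hω]
              _ = (1 - c k) * ν (E r n) := lintegral_indicator_const (hEmeas r n) _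
        _ = (1 - c k) * ν (Wr r) := by rw [ENNReal.tsum_mul_left, hWrsum r]
    have htend : Filter.Tendsto (fun r => ν (Wr r)) Filter.atTop (nhds (ν (CC ∩ Inf))) := by
      have := tendsto_measure_iInter_atTop (μ := ν)
        (fun r => (hWrmeas r).nullMeasurableSet) hWranti ⟨0, measure_ne_top ν _⟩
      rwa [hWrInter] at this
    have hInfzero : ν (CC ∩ Inf) = 0 := by
      have hle : ν (CC ∩ Inf) ≤ (1 - c k) * ν (CC ∩ Inf) := by
        refine ge_of_tendsto' (ENNReal.Tendsto.const_mul htend (Or.inr ?_)) hbound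
        exact (tsub_le_self.trans_lt (lt_top_iff_ne_top.mpr ENNReal.one_ne_top)).ne
      by_contra hne
      have hfin : ν (CC ∩ Inf) ≠ ⊤ := measure_ne_top ν _
      have hck0 : c k ≠ 0 := by
        rw [hcdef]
        refine ENNReal.inv_ne_zero.mpr ?_
        simp [ENNReal.add_eq_top]
      have hlt1 : 1 - c k < 1 := ENNReal.sub_lt_self ENNReal.one_ne_top one_ne_zero hck0
      have hmul : ν (CC ∩ Inf) * (1 - c k) < ν (CC ∩ Inf) * 1 :=
        (ENNReal.mul_lt_mul_iff_right hne hfin).mpr hlt1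
      rw [mul_one] at hmul
      rw [mul_comm] at hle
      exact absurd (hle.trans_lt hmul) (lt_irrefl _)
    refine measure_mono_null ?_ (measure_union_null hInfzero (dich (V k) (hVo k)))
    rintro η ⟨hCCη, hvis⟩
    by_cases hInfη : ∀ m, ∃ j, m ≤ j ∧ η j ∈ V k
    · exact Or.inl ⟨hCCη, hInfη⟩
    · exact Or.inr ⟨hvis, hInfη⟩
  -- conclusion: ν CC = 0
  have hCCzero : ν CC = 0 := by
    have hsub : CC ⊆ (⋂ k, {η : ℕ → X | ∀ j, η j ∉ V k})
        ∪ ⋃ k, (CC ∩ {η | ∃ j, η j ∈ V k}) := by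
      intro η hη
      by_cases hA : ∀ k : ℕ, ∀ j, η j ∉ V k
      · exact Or.inl (mem_iInter.mpr fun k => hA k)
      · push_neg at hA
        obtain ⟨k, j, hj⟩ := hA
        exact Or.inr (mem_iUnion.mpr ⟨k, hη, ⟨j, hj⟩⟩)
    have hinter : (⋂ k, {η : ℕ → X | ∀ j, η j ∉ V k}) = ∅ := by
      ext η
      simp only [mem_iInter, mem_setOf_eq, mem_empty_iff_false, iff_false]
      push_neg
      obtain ⟨n, hn⟩ := ENNReal.exists_inv_nat_lt (hpos (η 0)).ne'
      refine ⟨n, 0, ?_⟩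
      show c n < h (η 0)
      refine lt_of_le_of_lt ?_ hn
      rw [hcdef]
      refine ENNReal.inv_le_inv' ?_
      exact le_add_of_nonneg_right zero_le
    refine le_antisymm ?_ zero_le
    calc ν CC ≤ ν (⋂ k, {η : ℕ → X | ∀ j, η j ∉ V k})
          + ν (⋃ k, (CC ∩ {η | ∃ j, η j ∈ V k})) :=
        (measure_mono hsub).trans (measure_union_le _ _)
      _ = 0 := by
          rw [hinter, measure_empty, measure_iUnion_null fun k => hk0 k, add_zero]
  -- translate back to the original chain
  have hsetid : {ω : ℕ → X | ∃ n, 1 ≤ n ∧ ω n ∈ G} = shiftPath ⁻¹' CCᶜ := by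
    ext ω
    simp only [mem_setOf_eq, mem_preimage, mem_compl_iff, hCCdef]
    constructor
    · rintro ⟨n, h1, h2⟩
      intro hall
      refine hall (n - 1) ?_
      show ω (n - 1 + 1) ∈ G
      have : n - 1 + 1 = n := by omega
      rwa [this]
    · intro hη
      push_neg at hη
      obtain ⟨j, hj⟩ := hη
      exact ⟨j + 1, by omega, hj⟩
  rw [hsetid, ← Measure.map_apply measurable_shiftPath hCCmeas.compl, hνstep,
    prob_compl_eq_one_sub hCCmeas, hCCzero, tsub_zero]
end
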